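/- Suppose the face τ of ℚ_{≥0}A satisfies (ℚ(A∩τ)) ∩ ℤA = ℤ(A∩τ). If β - β' ∈ ℤA and both E_τ(β) and E_τ(β') are nonempty, then E_τ(β) = E_τ(β'). -/

import Mathlib

open scoped BigOperators

/-- Cast an integer vector to a vector over `k`. -/
def castVec (k : Type*) [Field k] {d : ℕ} (v : Fin d → ℤ) : Fin d → k :=
  fun i => (v i : k)

/-- Cast an integer vector to a rational vector. -/
def castQVec {d : ℕ} (v : Fin d → ℤ) : Fin d → ℚ := fun i => (v i : ℚ)

/-- The `j`-th column of `A` viewed over `ℚ`. -/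
def aQ {d n : ℕ} (a : Fin n → Fin d → ℤ) (j : Fin n) : Fin d → ℚ := fun i => (a j i : ℚ)

/-- The monoid `ℕA` inside `k^d`. -/
def NAk (k : Type*) [Field k] {d n : ℕ} (a : Fin n → Fin d → ℤ) : AddSubmonoid (Fin d → k) :=
  AddSubmonoid.closure (Set.range fun j => castVec k (a j))

/-- The group `ℤ(A∩τ)` inside `k^d`. -/
def Zk (k : Type*) [Field k] {d n : ℕ} (a : Fin n → Fin d → ℤ) (τ : Set (Fin n)) :
    AddSubgroup (Fin d → k) :=
  AddSubgroup.closure ((fun j => castVec k (a j)) '' τ)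

/-- The `k`-linear span `k(A∩τ)` inside `k^d`. -/
def kspan (k : Type*) [Field k] {d n : ℕ} (a : Fin n → Fin d → ℤ) (τ : Set (Fin n)) :
    Submodule k (Fin d → k) :=
  Submodule.span k ((fun j => castVec k (a j)) '' τ)

/-- The set `E_τ(β) = {λ ∈ k(A∩τ)/ℤ(A∩τ) : β - λ ∈ ℕA + ℤ(A∩τ)}`,
realized inside the quotient of `k^d` by `ℤ(A∩τ)`. -/
def Eface (k : Type*) [Field k] {d n : ℕ} (a : Fin n → Fin d → ℤ) (τ : Set (Fin n))
    (β : Fin d → k) : Set ((Fin d → k) ⧸ Zk k a τ) :=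
  { x | ∃ lam : Fin d → k, lam ∈ kspan k a τ ∧ QuotientAddGroup.mk lam = x ∧
      ∃ m ∈ NAk k a, ∃ z ∈ Zk k a τ, β - lam = m + z }

/-- The monoid `ℕA` inside `ℤ^d`. -/
def NAint {d n : ℕ} (a : Fin n → Fin d → ℤ) : AddSubmonoid (Fin d → ℤ) :=
  AddSubmonoid.closure (Set.range a)

/-- The group `ℤ(A∩τ)` inside `ℤ^d`. -/
def Zint {d n : ℕ} (a : Fin n → Fin d → ℤ) (τ : Set (Fin n)) : AddSubgroup (Fin d → ℤ) :=
  AddSubgroup.closure (a '' τ)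

/-- A face of the cone `ℚ_{≥0}A`: the zero set on `A` of a supporting linear functional. -/
def IsFace {d n : ℕ} (a : Fin n → Fin d → ℤ) (τ : Set (Fin n)) : Prop :=
  ∃ F : (Fin d → ℚ) →ₗ[ℚ] ℚ, (∀ j, 0 ≤ F (aQ a j)) ∧ τ = {j | F (aQ a j) = 0}

/-- Integer dot product. -/
def dotZ {d : ℕ} (c v : Fin d → ℤ) : ℤ := ∑ i, c i * v i

/-- The `k`-linear extension of the linear form with integral coefficient vector `c`. -/
def dotK (k : Type*) [Field k] {d : ℕ} (c : Fin d → ℤ) (β : Fin d → k) : k :=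
  ∑ i, (c i : k) * β i

/-- `c` is the coefficient vector of the primitive integral support function of the facet `σ`:
nonnegative on the columns, vanishing exactly on the columns in `σ`, and with value group `ℤ`
on `ℤA`. -/
def IsPrimSupp {d n : ℕ} (a : Fin n → Fin d → ℤ) (σ : Set (Fin n)) (c : Fin d → ℤ) : Prop :=
  (∀ j, 0 ≤ dotZ c (a j)) ∧ (∀ j, dotZ c (a j) = 0 ↔ j ∈ σ) ∧
  (∃ u : Fin n → ℤ, ∑ j, u j * dotZ c (a j) = 1)

/-- A facet: a face of dimension `d-1`. -/
def IsFacet {d n : ℕ} (a : Fin n → Fin d → ℤ) (σ : Set (Fin n)) : Prop :=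
  IsFace a σ ∧ Module.finrank ℚ (Submodule.span ℚ (aQ a '' σ)) = d - 1

/-- All columns of `A` lie on a common affine hyperplane off the origin. -/
def OnHyperplane {d n : ℕ} (a : Fin n → Fin d → ℤ) : Prop :=
  ∃ h : Fin d → ℚ, ∀ j, ∑ i, h i * (a j i : ℚ) = 1

/-- The matrix `A` has rank `d`. -/
def FullRank {d n : ℕ} (a : Fin n → Fin d → ℤ) : Prop :=
  Submodule.span ℚ (Set.range (aQ a)) = ⊤

/-- The rational cone `ℚ_{≥0}A`. -/
def coneQ {d n : ℕ} (a : Fin n → Fin d → ℤ) : Set (Fin d → ℚ) :=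
  {x | ∃ c : Fin n → ℚ, (∀ j, 0 ≤ c j) ∧ x = ∑ j, c j • aQ a j}

/-- Normality of the semigroup: `ℕA = ℤA ∩ ℚ_{≥0}A`. -/
def IsNormal {d n : ℕ} (a : Fin n → Fin d → ℤ) : Prop :=
  ∀ v : Fin d → ℤ, v ∈ Zint a Set.univ → castQVec v ∈ coneQ a → v ∈ NAint a

/-- Coordinatewise cast `ℤ^d → ℚ^d` as an additive monoid homomorphism. -/
def castQhom (d : ℕ) : (Fin d → ℤ) →+ (Fin d → ℚ) where
  toFun v := fun i => (v i : ℚ)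
  map_zero' := by funext i; simp
  map_add' u v := by funext i; simp

/-- The lattice `(ℚ(A∩τ)) ∩ ℤA` inside `ℤ^d`. -/
def latticeQτ {d n : ℕ} (a : Fin n → Fin d → ℤ) (τ : Set (Fin n)) :
    AddSubgroup (Fin d → ℤ) :=
  Zint a Set.univ ⊓
    AddSubgroup.comap (castQhom d) (Submodule.span ℚ (aQ a '' τ)).toAddSubgroup
/-- Coordinatewise cast `ℤ^d → k^d` as an additive monoid homomorphism. -/
def castKhom (k : Type*) [Field k] (d : ℕ) : (Fin d → ℤ) →+ (Fin d → k) where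
  toFun := castVec k
  map_zero' := by funext i; simp [castVec]
  map_add' u v := by funext i; simp [castVec]

lemma Zk_eq_map (k : Type*) [Field k] {d n : ℕ} (a : Fin n → Fin d → ℤ) (S : Set (Fin n)) :
    Zk k a S = (Zint a S).map (castKhom k d) := by
  unfold Zk Zint
  rw [AddMonoidHom.map_closure, Set.image_image]
  rfl

lemma NAk_le_Zk (k : Type*) [Field k] {d n : ℕ} (a : Fin n → Fin d → ℤ) :
    ∀ x ∈ NAk k a, x ∈ Zk k a Set.univ := by
  intro x hx
  have h : NAk k a ≤ (Zk k a Set.univ).toAddSubmonoid := by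
    apply AddSubmonoid.closure_le.2
    rintro y ⟨j, rfl⟩
    exact AddSubgroup.subset_closure ⟨j, Set.mem_univ j, rfl⟩
  exact h hx

lemma Zk_decomp (k : Type*) [Field k] {d n : ℕ} (a : Fin n → Fin d → ℤ)
    {x : Fin d → k} (hx : x ∈ Zk k a Set.univ) :
    ∃ m ∈ NAk k a, ∃ m' ∈ NAk k a, x = m - m' := by
  refine AddSubgroup.closure_induction ?_ ?_ ?_ ?_ hx
  · rintro y ⟨j, -, rfl⟩
    exact ⟨castVec k (a j), AddSubmonoid.subset_closure ⟨j, rfl⟩, 0, (NAk k a).zero_mem,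
      (sub_zero _).symm⟩
  · exact ⟨0, (NAk k a).zero_mem, 0, (NAk k a).zero_mem, (sub_zero 0).symm⟩
  · rintro y z - - ⟨m1, hm1, m1', hm1', rfl⟩ ⟨m2, hm2, m2', hm2', rfl⟩
    exact ⟨m1 + m2, (NAk k a).add_mem hm1 hm2, m1' + m2', (NAk k a).add_mem hm1' hm2',
      by abel⟩
  · rintro y - ⟨m1, hm1, m1', hm1', rfl⟩
    exact ⟨m1', hm1', m1, hm1, by abel⟩

/-- Transfer: an integer vector whose cast lies in the `k`-span lies in the `ℚ`-span. -/
lemma cast_mem_span_transfer (k : Type*) [Field k] [CharZero k] {d n : ℕ}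
    (a : Fin n → Fin d → ℤ) (τ : Set (Fin n)) (v : Fin d → ℤ)
    (hv : castVec k v ∈ kspan k a τ) :
    castQVec v ∈ Submodule.span ℚ (aQ a '' τ) := by
  by_contra hnot
  set W : Submodule ℚ (Fin d → ℚ) := Submodule.span ℚ (aQ a '' τ) with hW
  have hq : W.mkQ (castQVec v) ≠ 0 := by
    simpa [Submodule.Quotient.mk_eq_zero] using hnot
  obtain ⟨φ, hφ⟩ : ∃ φ : Module.Dual ℚ ((Fin d → ℚ) ⧸ W), φ (W.mkQ (castQVec v)) ≠ 0 := by
    by_contra hc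
    push_neg at hc
    exact hq ((Module.forall_dual_apply_eq_zero_iff ℚ _).1 hc)
  set f : (Fin d → ℚ) →ₗ[ℚ] ℚ := φ.comp W.mkQ with hf
  have hfW : ∀ w ∈ W, f w = 0 := by
    intro w hw
    have h0 : W.mkQ w = 0 := (Submodule.Quotient.mk_eq_zero W).2 hw
    simp [hf, h0]
  set c : Fin d → ℚ := fun i => f (fun j => if i = j then 1 else 0) with hc
  have hfx : ∀ x : Fin d → ℚ, f x = ∑ i, x i * c i := by
    intro x
    rw [LinearMap.pi_apply_eq_sum_univ f x]
    simp [hc, smul_eq_mul]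
  set g : (Fin d → k) →ₗ[k] k :=
    { toFun := fun x => ∑ i, (c i : k) * x i
      map_add' := by intro x y; simp [mul_add, Finset.sum_add_distrib]
      map_smul' := by
        intro r x
        simp only [Pi.smul_apply, smul_eq_mul, RingHom.id_apply]
        rw [Finset.mul_sum]
        exact Finset.sum_congr rfl fun i _ => by ring } with hg
  have hgcast : ∀ u : Fin d → ℤ, g (castVec k u) = ((f (castQVec u) : ℚ) : k) := by
    intro u
    rw [hfx]
    show (∑ i, (c i : k) * ((u i : ℤ) : k)) = _
    push_cast [castQVec]
    exact Finset.sum_congr rfl fun i _ => by ring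
  have hgW : ∀ x ∈ kspan k a τ, g x = 0 := by
    intro x hx
    refine Submodule.span_induction ?_ (by simp) (fun y z _ _ hy hz => by rw [map_add, hy, hz, add_zero])
      (fun r y _ hy => by rw [map_smul, hy, smul_zero]) hx
    rintro y ⟨j, hj, rfl⟩
    have h0 : f (aQ a j) = 0 := hfW _ (Submodule.subset_span ⟨j, hj, rfl⟩)
    have h1 := hgcast (a j)
    have h2 : castQVec (a j) = aQ a j := rfl
    rw [h2, h0] at h1
    simpa using h1
  have h1 : g (castVec k v) = 0 := hgW _ hv
  rw [hgcast v] at h1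
  exact hφ (by exact_mod_cast h1)

lemma Zk_mono (k : Type*) [Field k] {d n : ℕ} (a : Fin n → Fin d → ℤ) (τ : Set (Fin n)) :
    Zk k a τ ≤ Zk k a Set.univ :=
  AddSubgroup.closure_mono (Set.image_mono (Set.subset_univ τ))

/-- Under the index-one hypothesis, `Eface` has at most one element. -/
lemma Eface_subsingleton {d n : ℕ} (a : Fin n → Fin d → ℤ) (k : Type*) [Field k] [CharZero k]
    (τ : Set (Fin n))
    (hidx : ∀ v : Fin d → ℤ, v ∈ Zint a Set.univ →
      castQVec v ∈ Submodule.span ℚ (aQ a '' τ) → v ∈ Zint a τ)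
    (γ : Fin d → k) {x y : (Fin d → k) ⧸ Zk k a τ}
    (hx : x ∈ Eface k a τ γ) (hy : y ∈ Eface k a τ γ) : x = y := by
  obtain ⟨lam, hlam, rfl, m, hm, z, hz, heq⟩ := hx
  obtain ⟨lam', hlam', rfl, m', hm', z', hz', heq'⟩ := hy
  have key : lam - lam' = (m' + z') - (m + z) := by
    rw [← heq, ← heq']; abel
  have hu1 : lam - lam' ∈ Zk k a Set.univ := by
    rw [key]
    exact sub_mem (add_mem (NAk_le_Zk k a _ hm') (Zk_mono k a τ hz'))
      (add_mem (NAk_le_Zk k a _ hm) (Zk_mono k a τ hz))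
  have hu2 : lam - lam' ∈ kspan k a τ := sub_mem hlam hlam'
  rw [Zk_eq_map] at hu1
  obtain ⟨v, hv, hveq⟩ := hu1
  have hvk : castVec k v = lam - lam' := hveq
  have hvspan : castQVec v ∈ Submodule.span ℚ (aQ a '' τ) :=
    cast_mem_span_transfer k a τ v (by rw [hvk]; exact hu2)
  have hvτ : v ∈ Zint a τ := hidx v hv hvspan
  have hmem : lam - lam' ∈ Zk k a τ := by
    rw [Zk_eq_map]; exact ⟨v, hvτ, hveq⟩
  refine (QuotientAddGroup.eq (s := Zk k a τ) (a := lam) (b := lam')).2 ?_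
  have : -lam + lam' = -(lam - lam') := by abel
  rw [this]
  exact neg_mem hmem

lemma Eface_mono {d n : ℕ} (a : Fin n → Fin d → ℤ) (k : Type*) [Field k]
    (τ : Set (Fin n)) (γ m : Fin d → k) (hm : m ∈ NAk k a)
    {x : (Fin d → k) ⧸ Zk k a τ} (hx : x ∈ Eface k a τ γ) : x ∈ Eface k a τ (γ + m) := by
  obtain ⟨lam, hlam, rfl, m0, hm0, z, hz, heq⟩ := hx
  refine ⟨lam, hlam, rfl, m0 + m, (NAk k a).add_mem hm0 hm, z, hz, ?_⟩
  rw [show γ + m - lam = (γ - lam) + m by abel, heq]; abel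

/-- If the face `τ` satisfies `(ℚ(A∩τ)) ∩ ℤA = ℤ(A∩τ)`, `β - β' ∈ ℤA`, and
both `E_τ(β)` and `E_τ(β')` are nonempty, then `E_τ(β) = E_τ(β')`. -/
theorem stmt7 {d n : ℕ} (a : Fin n → Fin d → ℤ) (k : Type*) [Field k] [CharZero k]
    (τ : Set (Fin n)) (hτ : IsFace a τ)
    (hidx : ∀ v : Fin d → ℤ, v ∈ Zint a Set.univ →
      castQVec v ∈ Submodule.span ℚ (aQ a '' τ) → v ∈ Zint a τ)
    (β β' : Fin d → k) (hββ' : β - β' ∈ Zk k a Set.univ)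
    (h1 : (Eface k a τ β).Nonempty) (h2 : (Eface k a τ β').Nonempty) :
    Eface k a τ β = Eface k a τ β' := by
  obtain ⟨x, hx⟩ := h1
  obtain ⟨y, hy⟩ := h2
  obtain ⟨m, hm, m', hm', hd⟩ := Zk_decomp k a hββ'
  have hsum : β + m' = β' + m := by
    have : β - β' + (β' + m') = m - m' + (β' + m') := by rw [hd]
    calc β + m' = β - β' + (β' + m') := by abel
    _ = m - m' + (β' + m') := this
    _ = β' + m := by abel
  have hx2 : x ∈ Eface k a τ (β + m') := Eface_mono a k τ β m' hm' hx
  have hy2 : y ∈ Eface k a τ (β + m') := by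
    rw [hsum]; exact Eface_mono a k τ β' m hm hy
  have hxy : x = y := Eface_subsingleton a k τ hidx (β + m') hx2 hy2
  ext w
  constructor
  · intro hw
    have hw2 : w ∈ Eface k a τ (β + m') := Eface_mono a k τ β m' hm' hw
    have : w = y := Eface_subsingleton a k τ hidx (β + m') hw2 hy2
    rw [this]; exact hy
  · intro hw
    have hw2 : w ∈ Eface k a τ (β + m') := by
      rw [hsum]; exact Eface_mono a k τ β' m hm hw
    have : w = x := Eface_subsingleton a k τ hidx (β + m') hw2 hx2
    rw [this]; exact hx
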